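/- Let a, ε, β, R be positive reals with ε/(2β) < 1, and let x₀, x be points with ρ(x) sufficiently large, where ρ measures distance to x₀. Suppose every pair of points y, y' with ρ(y) ≥ R and ρ(y) < (ε/(2β))·ρ(y') satisfies d_B(y,y') ≥ √2/2 for a distance function d_B. Then d_B(x₀, x) ≥ c·log(1 + ρ(x)) for a constant c > 0 depending only on ε, β, R. -/

import Mathlib

set_option maxHeartbeats 1000000 in
/-- Abstract chaining lemma.  Let `ρ` be the (continuous) distance to a base point `x₀`
on a path-connected space `M`, and let `d_B` be a distance function on `M` which is a
length metric: every pair `x₀, x` is joined by continuous curves whose `d_B`-length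
(supremum over partitions of sums of consecutive distances) approximates `d_B(x₀,x)`.
Suppose `ε, β, R > 0` with `ε/(2β) < 1`, and every pair `y, y'` with `ρ(y) ≥ R` and
`ρ(y) < (ε/(2β))·ρ(y')` satisfies `d_B(y,y') ≥ √2/2`.  Then there are `c > 0` and a
threshold `T` (depending only on `ε, β, R`) with `d_B(x₀,x) ≥ c·log(1+ρ(x))` for all
`x` with `ρ(x) ≥ T`. -/
theorem chaining_log_lower_bound
    {M : Type*} [TopologicalSpace M] (ρ : M → ℝ) (hρcont : Continuous ρ)
    (hρnn : ∀ x, 0 ≤ ρ x) (x₀ : M) (hρ0 : ρ x₀ = 0)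
    (dB : M → M → ℝ) (hdBnn : ∀ x y, 0 ≤ dB x y)
    (hdBsymm : ∀ x y, dB x y = dB y x)
    (hdBtri : ∀ x y z, dB x z ≤ dB x y + dB y z)
    (ε β R : ℝ) (hε : 0 < ε) (hβ : 0 < β) (hR : 0 < R) (hq : ε / (2 * β) < 1)
    (hpair : ∀ y y' : M, R ≤ ρ y → ρ y < ε / (2 * β) * ρ y' →
      Real.sqrt 2 / 2 ≤ dB y y')
    (hlength : ∀ x : M, ∀ δ : ℝ, 0 < δ → ∃ γ : ℝ → M,
      ContinuousOn γ (Set.Icc (0 : ℝ) 1) ∧ γ 0 = x₀ ∧ γ 1 = x ∧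
      ∀ (n : ℕ) (t : Fin (n + 1) → ℝ), Monotone t →
        (∀ i, t i ∈ Set.Icc (0 : ℝ) 1) →
        ∑ i : Fin n, dB (γ (t i.castSucc)) (γ (t i.succ)) ≤ dB x₀ x + δ) :
    ∃ c : ℝ, 0 < c ∧ ∃ T : ℝ, ∀ x : M, T ≤ ρ x →
      c * Real.log (1 + ρ x) ≤ dB x₀ x := by
  set q : ℝ := ε / (2 * β) with hq_def
  have hq0 : 0 < q := div_pos hε (by positivity)
  set r : ℝ := 2 / q with hr_def
  have hr1 : 1 < r := by
    rw [hr_def, lt_div_iff₀ hq0]; linarith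
  have hr0 : 0 < r := lt_trans one_pos hr1
  have hqr : q * r = 2 := by
    rw [hr_def]; field_simp [hq0.ne']
  have hlogr : 0 < Real.log r := Real.log_pos hr1
  clear_value q r
  have hs2 : 0 < Real.sqrt 2 := Real.sqrt_pos.mpr (by norm_num)
  -- Key chaining estimate
  have key : ∀ x : M, ∀ n : ℕ, R * r ^ n ≤ ρ x →
      (n : ℝ) * (Real.sqrt 2 / 2) ≤ dB x₀ x := by
    intro x n hn
    refine le_of_forall_pos_le_add (fun δ hδ => ?_)
    obtain ⟨γ, hγc, hγ0, hγ1, hγlen⟩ := hlength x δ hδ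
    have hf : ContinuousOn (fun t => ρ (γ t)) (Set.Icc (0:ℝ) 1) :=
      hρcont.comp_continuousOn hγc
    have hf0 : ρ (γ 0) = 0 := by rw [hγ0, hρ0]
    have hf1 : ρ (γ 1) = ρ x := by rw [hγ1]
    -- build monotone chain of times
    have chain : ∀ k : ℕ, k ≤ n → ∃ u : ℕ → ℝ, Monotone u ∧
        (∀ i, u i ∈ Set.Icc (0:ℝ) 1) ∧ ∀ i ≤ k, ρ (γ (u i)) = R * r ^ i := by
      intro k hk
      induction k with
      | zero =>
        have hmem : R ∈ Set.Icc (ρ (γ 0)) (ρ (γ 1)) := by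
          constructor
          · rw [hf0]; exact le_of_lt hR
          · rw [hf1]
            calc R = R * 1 := (mul_one R).symm
            _ ≤ R * r ^ n := by
              have : (1:ℝ) ≤ r ^ n := one_le_pow₀ (le_of_lt hr1)
              nlinarith
            _ ≤ ρ x := hn
        obtain ⟨t₀, ht₀, hft₀⟩ := intermediate_value_Icc zero_le_one hf hmem
        refine ⟨fun _ => t₀, monotone_const, fun _ => ht₀, ?_⟩
        intro i hi
        interval_cases i
        simpa using hft₀
      | succ k ih =>
        obtain ⟨u, humono, humem, huval⟩ := ih (le_trans (Nat.le_succ k) hk)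
        have hs := humem k
        have hfs : ρ (γ (u k)) = R * r ^ k := huval k le_rfl
        have hmem : R * r ^ (k+1) ∈ Set.Icc (ρ (γ (u k))) (ρ (γ 1)) := by
          constructor
          · rw [hfs]
            have : r ^ k ≤ r ^ (k+1) := pow_le_pow_right₀ (le_of_lt hr1) (Nat.le_succ k)
            nlinarith
          · rw [hf1]
            calc R * r ^ (k+1) ≤ R * r ^ n := by
                  have : r ^ (k+1) ≤ r ^ n := pow_le_pow_right₀ (le_of_lt hr1) hk
                  nlinarith
            _ ≤ ρ x := hn
        obtain ⟨t', ht', hft'⟩ := intermediate_value_Icc hs.2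
          (hf.mono (Set.Icc_subset_Icc hs.1 le_rfl)) hmem
        have ht'01 : t' ∈ Set.Icc (0:ℝ) 1 := ⟨le_trans hs.1 ht'.1, ht'.2⟩
        refine ⟨fun i => if i ≤ k then u i else t', ?_, ?_, ?_⟩
        · intro i j hij
          by_cases hi : i ≤ k
          · by_cases hj : j ≤ k
            · simp [hi, hj]; exact humono hij
            · simp only [hi, hj, if_true, if_false]
              exact le_trans (humono hi) ht'.1
          · have hj : ¬ j ≤ k := fun h => hi (le_trans hij h)
            simp [hi, hj]
        · intro i
          by_cases hi : i ≤ k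
          · simp only [hi, if_true]; exact humem i
          · simp only [hi, if_false]; exact ht'01
        · intro i hi
          by_cases hik : i ≤ k
          · simp only [hik, if_true]; exact huval i hik
          · have : i = k + 1 := le_antisymm hi (Nat.lt_of_not_le hik)
            subst this
            simpa [Nat.not_succ_le_self] using hft'
    obtain ⟨u, humono, humem, huval⟩ := chain n le_rfl
    have hsum := hγlen n (fun i => u i.val)
      (fun i j hij => humono hij) (fun i => humem i.val)
    have hterm : ∀ i : Fin n, Real.sqrt 2 / 2 ≤
        dB (γ (u i.castSucc.val)) (γ (u i.succ.val)) := by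
      intro i
      have hi1 : (i.castSucc.val : ℕ) = i.val := rfl
      have hi2 : (i.succ.val : ℕ) = i.val + 1 := rfl
      have hv1 : ρ (γ (u i.castSucc.val)) = R * r ^ (i.val) := by
        rw [hi1]; exact huval i.val (le_of_lt i.isLt)
      have hv2 : ρ (γ (u i.succ.val)) = R * r ^ (i.val + 1) := by
        rw [hi2]; exact huval (i.val + 1) i.isLt
      apply hpair
      · rw [hv1]
        have : (1:ℝ) ≤ r ^ i.val := one_le_pow₀ (le_of_lt hr1)
        nlinarith
      · rw [hv1, hv2]
        have hrpos : (0:ℝ) < r ^ i.val := pow_pos hr0 _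
        have : q * (R * r ^ (i.val + 1)) = 2 * (R * r ^ i.val) := by
          rw [pow_succ, ← hqr]; ring
        rw [this]; nlinarith
    calc (n : ℝ) * (Real.sqrt 2 / 2)
        = ∑ _i : Fin n, Real.sqrt 2 / 2 := by
          rw [Finset.sum_const, Finset.card_univ, Fintype.card_fin]
          simp [nsmul_eq_mul]
      _ ≤ ∑ i : Fin n, dB (γ (u i.castSucc.val)) (γ (u i.succ.val)) :=
          Finset.sum_le_sum (fun i _ => hterm i)
      _ ≤ dB x₀ x + δ := hsum
  -- choose c and T
  refine ⟨Real.sqrt 2 / (4 * Real.log r), by positivity,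
    max (max 1 R) (2 * (R * r) ^ 2), fun x hx => ?_⟩
  have hx1 : (1:ℝ) ≤ ρ x := le_trans (le_trans (le_max_left 1 R) (le_max_left _ _)) hx
  have hxR : R ≤ ρ x := le_trans (le_trans (le_max_right 1 R) (le_max_left _ _)) hx
  have hxRr : 2 * (R * r) ^ 2 ≤ ρ x := le_trans (le_max_right _ _) hx
  have hρx0 : 0 < ρ x := lt_of_lt_of_le one_pos hx1
  set y : ℝ := Real.logb r (ρ x / R) with hy_def
  have hdiv1 : (1:ℝ) ≤ ρ x / R := (one_le_div hR).mpr hxR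
  have hy0 : 0 ≤ y := Real.logb_nonneg hr1 hdiv1
  set n : ℕ := ⌊y⌋₊ with hn_def
  have hrn : R * r ^ n ≤ ρ x := by
    have h1 : (r : ℝ) ^ (n : ℝ) ≤ r ^ y :=
      Real.rpow_le_rpow_of_exponent_le (le_of_lt hr1) (Nat.floor_le hy0)
    have h2 : r ^ y = ρ x / R := Real.rpow_logb hr0 (ne_of_gt hr1) (by positivity)
    have h3 : (r : ℝ) ^ (n : ℕ) ≤ ρ x / R := by
      rw [← Real.rpow_natCast r n]; rw [h2] at h1; exact h1
    calc R * r ^ n ≤ R * (ρ x / R) := by nlinarith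
      _ = ρ x := by field_simp
  have hkey := key x n hrn
  have hny : y - 1 < (n : ℝ) := Nat.sub_one_lt_floor y
  -- arithmetic
  have hyval : y = (Real.log (ρ x) - Real.log R) / Real.log r := by
    rw [hy_def, Real.logb, Real.log_div (ne_of_gt hρx0) (ne_of_gt hR)]
  have hlog1 : Real.log (1 + ρ x) ≤ Real.log 2 + Real.log (ρ x) := by
    rw [← Real.log_mul (by norm_num) (ne_of_gt hρx0)]
    exact Real.log_le_log (by linarith) (by linarith)
  have hlog2 : Real.log 2 + 2 * Real.log R + 2 * Real.log r ≤ Real.log (ρ x) := by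
    have h := Real.log_le_log (by positivity : (0:ℝ) < 2 * (R * r) ^ 2) hxRr
    rw [Real.log_mul (by norm_num) (by positivity), Real.log_pow,
      Real.log_mul (ne_of_gt hR) (ne_of_gt hr0)] at h
    push_cast at h
    linarith
  have hgoal : Real.sqrt 2 / (4 * Real.log r) * Real.log (1 + ρ x)
      ≤ (y - 1) * (Real.sqrt 2 / 2) := by
    rw [hyval]
    rw [div_mul_eq_mul_div, div_le_iff₀ (by positivity : (0:ℝ) < 4 * Real.log r)]
    have expand : (Real.log (ρ x) - Real.log R) / Real.log r * Real.log r
        = Real.log (ρ x) - Real.log R := by field_simp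
    have hL : Real.log (1 + ρ x) ≤ 2 * Real.log (ρ x) - 2 * Real.log R - 2 * Real.log r := by
      linarith
    calc Real.sqrt 2 * Real.log (1 + ρ x)
        ≤ Real.sqrt 2 * (2 * Real.log (ρ x) - 2 * Real.log R - 2 * Real.log r) := by
          nlinarith
      _ = ((Real.log (ρ x) - Real.log R) / Real.log r - 1) * (Real.sqrt 2 / 2)
          * (4 * Real.log r) := by
          field_simp; ring
  calc Real.sqrt 2 / (4 * Real.log r) * Real.log (1 + ρ x)
      ≤ (y - 1) * (Real.sqrt 2 / 2) := hgoal
    _ ≤ (n : ℝ) * (Real.sqrt 2 / 2) := by nlinarith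
    _ ≤ dB x₀ x := hkey
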